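/- Let (Ω, 𝔄) be a measurable space, μ a probability measure on Ω, g : Ω → ℝ measurable with g(ω) > 0 for all ω, and for each n ∈ Fin N let a_n : Ω → ℝ be a nonnegative bounded measurable function and b_n ≥ 0 a real number; let p ∈ (0,1). Assume Z := ∑_{ξ : Fin N → Bool} ∫ g(ω) · ∏_n (if ξ n then p · a_n(ω) else (1−p) · b_n) dμ(ω) > 0, and let ν be the probability measure on Ω × (Fin N → Bool) determined by ν(A × {ξ}) = Z⁻¹ ∫_A g(ω) · ∏_n (if ξ n then p · a_n(ω) else (1−p) · b_n) dμ(ω). If ν equals the product of its two marginal measures, then for every n, either b_n = 0 or a_n is almost everywhere constant with respect to the first (Ω-)marginal of ν. -/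

import Mathlib

open MeasureTheory

/-- Multi-switch version of the key step in Theorem 1's proof: if the
posterior over the latent variable `ω` and the vector of Bernoulli channel
switches `ξ` (with per-word product density) equals the product of its
marginals, then for every word `n` either the irrelevant-channel probability
`b n` vanishes or the relevant-channel likelihood `a n` is a.e. constant with
respect to the first marginal of the posterior. -/
theorem pfslda_multi_switch_independence
    {Ω : Type*} [MeasurableSpace Ω]
    (μ : Measure Ω) [IsProbabilityMeasure μ]
    (g : Ω → ℝ) (hg_meas : Measurable g) (hg_pos : ∀ ω, 0 < g ω)
    (N : ℕ)
    (a : Fin N → Ω → ℝ)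
    (ha_meas : ∀ n, Measurable (a n))
    (ha_nn : ∀ n ω, 0 ≤ a n ω)
    (ha_bdd : ∀ n, ∃ C : ℝ, ∀ ω, a n ω ≤ C)
    (b : Fin N → ℝ) (hb : ∀ n, 0 ≤ b n)
    (p : ℝ) (hp : p ∈ Set.Ioo (0 : ℝ) 1)
    (Z : ℝ)
    (hZ : Z = ∑ ξ : Fin N → Bool,
      ∫ ω, g ω * ∏ n, (if ξ n then p * a n ω else (1 - p) * b n) ∂μ)
    (hZpos : 0 < Z)
    (ν : Measure (Ω × (Fin N → Bool))) [IsProbabilityMeasure ν]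
    (hν : ∀ (A : Set Ω) (ξ : Fin N → Bool), MeasurableSet A →
      ν (A ×ˢ ({ξ} : Set (Fin N → Bool))) =
        ENNReal.ofReal (Z⁻¹ *
          ∫ ω in A, g ω * ∏ n, (if ξ n then p * a n ω else (1 - p) * b n) ∂μ))
    (hindep : ν = ν.fst.prod ν.snd) :
    ∀ n, b n = 0 ∨ ∃ c : ℝ, a n =ᵐ[ν.fst] fun _ => c := by
  obtain ⟨hp0, hp1⟩ := hp
  have hq : (0:ℝ) < 1 - p := by linarith
  set f : (Fin N → Bool) → Ω → ℝ :=
    fun ξ ω => g ω * ∏ m, (if ξ m then p * a m ω else (1 - p) * b m) with hfdef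
  have hν' : ∀ (A : Set Ω) (ξ : Fin N → Bool), MeasurableSet A →
      ν (A ×ˢ ({ξ} : Set (Fin N → Bool))) =
        ENNReal.ofReal (Z⁻¹ * ∫ ω in A, f ξ ω ∂μ) := hν
  have hZ' : Z = ∑ ξ : Fin N → Bool, ∫ ω, f ξ ω ∂μ := hZ
  clear hν hZ
  have hf_meas : ∀ ξ, Measurable (f ξ) := by
    intro ξ
    apply hg_meas.mul
    apply Finset.measurable_prod
    intro m _
    split_ifs
    · exact measurable_const.mul (ha_meas m)
    · exact measurable_const
  have hf_nn : ∀ ξ ω, 0 ≤ f ξ ω := by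
    intro ξ ω
    apply mul_nonneg (hg_pos ω).le
    apply Finset.prod_nonneg
    intro m _
    split_ifs
    · exact mul_nonneg hp0.le (ha_nn m ω)
    · exact mul_nonneg hq.le (hb m)
  -- integrability of each density
  have hf_int : ∀ ξ, Integrable (f ξ) μ := by
    intro ξ
    have hmeas := hf_meas ξ
    refine ⟨hmeas.aestronglyMeasurable, ?_⟩
    rw [hasFiniteIntegral_iff_ofReal (Filter.Eventually.of_forall (hf_nn ξ))]
    set A : ℕ → Set Ω := fun k => {ω | f ξ ω ≤ (k : ℝ)} with hA
    have hAm : ∀ k, MeasurableSet (A k) := fun k =>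
      measurableSet_le hmeas measurable_const
    have hint : ∀ k, IntegrableOn (f ξ) (A k) μ := by
      intro k
      apply Measure.integrableOn_of_bounded (M := (k:ℝ)) (measure_ne_top μ _)
        hmeas.aestronglyMeasurable
      filter_upwards [ae_restrict_mem (hAm k)] with ω hω
      rw [Real.norm_eq_abs, abs_of_nonneg (hf_nn ξ ω)]
      exact hω
    have hbound : ∀ k, ∫ ω in A k, f ξ ω ∂μ ≤ Z := by
      intro k
      have h2 : ν (A k ×ˢ ({ξ} : Set (Fin N → Bool))) ≤ 1 := prob_le_one
      rw [hν' (A k) ξ (hAm k)] at h2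
      have h3 : Z⁻¹ * ∫ ω in A k, f ξ ω ∂μ ≤ 1 := ENNReal.ofReal_le_one.mp h2
      calc ∫ ω in A k, f ξ ω ∂μ = Z * (Z⁻¹ * ∫ ω in A k, f ξ ω ∂μ) := by
            field_simp
        _ ≤ Z * 1 := mul_le_mul_of_nonneg_left h3 hZpos.le
        _ = Z := mul_one Z
    calc ∫⁻ ω, ENNReal.ofReal (f ξ ω) ∂μ
        = ∫⁻ ω, ⨆ k, (A k).indicator (fun ω => ENNReal.ofReal (f ξ ω)) ω ∂μ := by
          congr 1
          ext ω
          refine (le_antisymm (ciSup_le ?_) ?_).symm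
          · intro k
            exact Set.indicator_le_self _ _ ω
          · obtain ⟨k, hk⟩ := exists_nat_ge (f ξ ω)
            refine le_iSup_of_le k ?_
            rw [Set.indicator_of_mem (show ω ∈ A k from hk)]
      _ = ⨆ k, ∫⁻ ω, (A k).indicator (fun ω => ENNReal.ofReal (f ξ ω)) ω ∂μ := by
          apply lintegral_iSup
          · intro k
            exact (hmeas.ennreal_ofReal).indicator (hAm k)
          · intro i j hij
            have hcast : ((i : ℕ) : ℝ) ≤ ((j : ℕ) : ℝ) := Nat.cast_le.mpr hij
            have hsub : A i ⊆ A j := fun x (hx : f ξ x ≤ ((i : ℕ) : ℝ)) =>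
              (le_trans hx hcast : f ξ x ≤ ((j : ℕ) : ℝ))
            intro ω
            exact Set.indicator_le_indicator_of_subset hsub (fun x => zero_le) ω
      _ ≤ ENNReal.ofReal Z := by
          apply iSup_le
          intro k
          rw [lintegral_indicator (hAm k) _,
            ← ofReal_integral_eq_lintegral_ofReal (hint k)
              (Filter.Eventually.of_forall fun ω => hf_nn ξ ω)]
          exact ENNReal.ofReal_le_ofReal (hbound k)
      _ < ⊤ := ENNReal.ofReal_lt_top
  -- a ξ with positive total mass
  obtain ⟨ξ, hξpos⟩ : ∃ ξ : Fin N → Bool, 0 < ∫ ω, f ξ ω ∂μ := by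
    by_contra h
    push_neg at h
    have : Z ≤ 0 := by
      rw [hZ']
      exact Finset.sum_nonpos fun ξ _ => h ξ
    linarith
  intro n
  rcases (hb n).eq_or_lt with hbn | hbn
  · exact Or.inl hbn.symm
  right
  -- the off-word-n part of the density
  set G : Ω → ℝ :=
    fun ω => g ω * ∏ m ∈ Finset.univ.erase n,
      (if ξ m then p * a m ω else (1 - p) * b m) with hGdef
  have hkey : ∀ (v : Bool) (ω : Ω), f (Function.update ξ n v) ω =
      (if v then p * a n ω else (1 - p) * b n) * G ω := by
    intro v ω
    show g ω * ∏ m, (if Function.update ξ n v m then p * a m ω else (1 - p) * b m) = _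
    rw [← Finset.mul_prod_erase Finset.univ _ (Finset.mem_univ n),
      Function.update_self]
    have hrest : ∏ m ∈ Finset.univ.erase n,
        (if Function.update ξ n v m then p * a m ω else (1 - p) * b m) =
        ∏ m ∈ Finset.univ.erase n, (if ξ m then p * a m ω else (1 - p) * b m) := by
      refine Finset.prod_congr rfl fun m hm => ?_
      rw [Function.update_of_ne (Finset.ne_of_mem_erase hm)]
    rw [hrest, hGdef]
    ring
  have hself : ∀ ω, f ξ ω = (if ξ n then p * a n ω else (1 - p) * b n) * G ω := by
    intro ω
    have := hkey (ξ n) ω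
    rwa [Function.update_eq_self] at this
  have hG_meas : Measurable G := by
    apply hg_meas.mul
    apply Finset.measurable_prod
    intro m _
    split_ifs
    · exact measurable_const.mul (ha_meas m)
    · exact measurable_const
  have hG_nn : ∀ ω, 0 ≤ G ω := by
    intro ω
    apply mul_nonneg (hg_pos ω).le
    apply Finset.prod_nonneg
    intro m _
    split_ifs
    · exact mul_nonneg hp0.le (ha_nn m ω)
    · exact mul_nonneg hq.le (hb m)
  have hc_pos : (0:ℝ) < (1 - p) * b n := mul_pos hq hbn
  have hG_int : Integrable G μ := by
    have h1 : Integrable (fun ω => (1 - p) * b n * G ω) μ := by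
      refine (hf_int (Function.update ξ n false)).congr
        (Filter.Eventually.of_forall fun ω => ?_)
      simpa using (hkey false ω)
    have h2 := h1.const_mul (((1 - p) * b n)⁻¹)
    refine h2.congr (Filter.Eventually.of_forall fun ω => ?_)
    field_simp
  have haG_int : Integrable (fun ω => a n ω * G ω) μ := by
    obtain ⟨C, hC⟩ := ha_bdd n
    refine hG_int.bdd_mul (c := C) (ha_meas n).aestronglyMeasurable (Filter.Eventually.of_forall fun ω => ?_)
    rw [Real.norm_eq_abs, abs_of_nonneg (ha_nn n ω)]
    exact hC ω
  set t : ℝ := ∫ ω, G ω ∂μ with htdef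
  set J : ℝ := ∫ ω, a n ω * G ω ∂μ with hJdef
  have ht_nn : 0 ≤ t := integral_nonneg hG_nn
  have ht : 0 < t := by
    rcases ht_nn.eq_or_lt with h0 | h
    · exfalso
      have hG0 : G =ᵐ[μ] 0 :=
        (integral_eq_zero_iff_of_nonneg hG_nn hG_int).mp h0.symm
      have hf0 : f ξ =ᵐ[μ] 0 := by
        filter_upwards [hG0] with ω hω
        rw [hself ω, hω]
        simp
      have := integral_eq_zero_of_ae hf0
      linarith
    · exact h
  -- independence identity
  have E : ∀ (A : Set Ω), MeasurableSet A → ∀ ξ' : Fin N → Bool,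
      ν.fst A * ν.snd {ξ'} = ENNReal.ofReal (Z⁻¹ * ∫ ω in A, f ξ' ω ∂μ) := by
    intro A hA ξ'
    rw [← Measure.prod_prod, ← hindep, hν' A ξ' hA]
  have hfst_univ : ν.fst Set.univ = 1 := measure_univ
  -- set integrals of the two updated densities
  have hIf : ∀ A : Set Ω, ∫ ω in A, f (Function.update ξ n false) ω ∂μ =
      (1 - p) * b n * ∫ ω in A, G ω ∂μ := by
    intro A
    rw [← integral_const_mul]
    exact integral_congr_ae (Filter.Eventually.of_forall fun ω => by
      simpa using hkey false ω)
  have hJt : ∀ A : Set Ω, ∫ ω in A, f (Function.update ξ n true) ω ∂μ =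
      p * ∫ ω in A, a n ω * G ω ∂μ := by
    intro A
    rw [← integral_const_mul]
    exact integral_congr_ae (Filter.Eventually.of_forall fun ω => by
      simp only [hkey true ω, if_true]
      ring)
  have Ef : ∀ (A : Set Ω), MeasurableSet A →
      ν.fst A * ν.snd {Function.update ξ n false} =
        ENNReal.ofReal (Z⁻¹ * ((1 - p) * b n * ∫ ω in A, G ω ∂μ)) := by
    intro A hA
    rw [E A hA, hIf A]
  have Et : ∀ (A : Set Ω), MeasurableSet A →
      ν.fst A * ν.snd {Function.update ξ n true} =
        ENNReal.ofReal (Z⁻¹ * (p * ∫ ω in A, a n ω * G ω ∂μ)) := by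
    intro A hA
    rw [E A hA, hJt A]
  have hsf : ν.snd {Function.update ξ n false} =
      ENNReal.ofReal (Z⁻¹ * ((1 - p) * b n * t)) := by
    have := Ef Set.univ MeasurableSet.univ
    rwa [hfst_univ, one_mul, setIntegral_univ] at this
  have hst : ν.snd {Function.update ξ n true} =
      ENNReal.ofReal (Z⁻¹ * (p * J)) := by
    have := Et Set.univ MeasurableSet.univ
    rwa [hfst_univ, one_mul, setIntegral_univ] at this
  have hsf_pos : (0:ℝ) < Z⁻¹ * ((1 - p) * b n * t) := by positivity
  -- the key real identity
  have key : ∀ (A : Set Ω), MeasurableSet A →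
      (∫ ω in A, a n ω * G ω ∂μ) * t = (∫ ω in A, G ω ∂μ) * J := by
    intro A hA
    have hIA : 0 ≤ ∫ ω in A, G ω ∂μ := setIntegral_nonneg hA fun ω _ => hG_nn ω
    have hJA : 0 ≤ ∫ ω in A, a n ω * G ω ∂μ :=
      setIntegral_nonneg hA fun ω _ => mul_nonneg (ha_nn n ω) (hG_nn ω)
    have hJnn : 0 ≤ J := integral_nonneg fun ω => mul_nonneg (ha_nn n ω) (hG_nn ω)
    have h1 := Ef A hA
    have h2 := Et A hA
    have hmul : ENNReal.ofReal ((Z⁻¹ * ((1 - p) * b n * ∫ ω in A, G ω ∂μ)) *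
          (Z⁻¹ * (p * J))) =
        ENNReal.ofReal ((Z⁻¹ * (p * ∫ ω in A, a n ω * G ω ∂μ)) *
          (Z⁻¹ * ((1 - p) * b n * t))) := by
      rw [ENNReal.ofReal_mul
          (show (0:ℝ) ≤ Z⁻¹ * ((1 - p) * b n * ∫ ω in A, G ω ∂μ) by positivity),
        ENNReal.ofReal_mul
          (show (0:ℝ) ≤ Z⁻¹ * (p * ∫ ω in A, a n ω * G ω ∂μ) by positivity),
        ← h1, ← h2, ← hsf, ← hst]
      ring
    have hreal : (Z⁻¹ * ((1 - p) * b n * ∫ ω in A, G ω ∂μ)) * (Z⁻¹ * (p * J)) =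
        (Z⁻¹ * (p * ∫ ω in A, a n ω * G ω ∂μ)) * (Z⁻¹ * ((1 - p) * b n * t)) := by
      rw [ENNReal.ofReal_eq_ofReal_iff (by positivity) (by positivity)] at hmul
      exact hmul
    have hcZ : (0:ℝ) < Z⁻¹ * Z⁻¹ * ((1 - p) * b n) * p := by positivity
    apply mul_left_cancel₀ hcZ.ne'
    linear_combination -hreal
  -- a.e. identity w.r.t. μ
  have hae : (fun ω => a n ω * G ω) =ᵐ[μ] fun ω => (J / t) * G ω := by
    apply Integrable.ae_eq_of_forall_setIntegral_eq _ _ haG_int (hG_int.const_mul _)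
    intro s hs _
    rw [integral_const_mul, div_mul_eq_mul_div, eq_div_iff ht.ne']
    linarith [key s hs]
  refine ⟨J / t, ?_⟩
  have hAbad : MeasurableSet {ω | ¬ a n ω = J / t} :=
    ((measurableSet_eq_fun (ha_meas n) measurable_const)).compl
  have hI0 : ∫ ω in {ω | ¬ a n ω = J / t}, G ω ∂μ = 0 := by
    have hz : G =ᵐ[μ.restrict {ω | ¬ a n ω = J / t}] 0 := by
      rw [Filter.EventuallyEq, ae_restrict_iff' hAbad]
      filter_upwards [hae] with ω hω hmem
      rcases mul_eq_mul_right_iff.mp hω with h | h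
      · exact absurd h hmem
      · simpa using h
    rw [integral_congr_ae hz]
    simp
  have hbad : ν.fst {ω | ¬ a n ω = J / t} = 0 := by
    have := Ef _ hAbad
    rw [hI0, mul_zero, mul_zero, ENNReal.ofReal_zero] at this
    have hsf_ne : ν.snd {Function.update ξ n false} ≠ 0 := by
      rw [hsf]
      exact (ENNReal.ofReal_pos.mpr hsf_pos).ne'
    exact (mul_eq_zero.mp this).resolve_right hsf_ne
  rw [Filter.EventuallyEq, ae_iff]
  exact hbad
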